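/- Fix ε* > 0 and T > 0. Assume that for every ε > 0 there is a continuous solution X^ε of the ε-approximating equation on [0,T], and that the continuous solution of the ε*-approximating equation on [0,T] is unique. Then for every t ∈ [0,T], lim_{ε→ε*} X^ε_t = X^{ε*}_t. -/

import Mathlib

open MeasureTheory Filter Set
open scoped Topology

/-- `X` is a continuous solution on `[0,T]` of the ε-approximating equation
`X_t = X₀ + a ∫₀ᵗ (s+ε)^{2H-1} / (X_s 1_{X_s>0} + ε) ds − b ∫₀ᵗ X_s ds + σ g(t)`. -/
def approxSol (X₀ a b σ H : ℝ) (g : ℝ → ℝ) (T ε : ℝ) (X : ℝ → ℝ) : Prop :=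
  ContinuousOn X (Set.Icc 0 T) ∧
    ∀ t ∈ Set.Icc (0:ℝ) T,
      X t = X₀ + a * (∫ s in (0:ℝ)..t,
            (s + ε) ^ (2 * H - 1) / ((if 0 < X s then X s else 0) + ε))
          - b * (∫ s in (0:ℝ)..t, X s) + σ * g t

private lemma ite_pos_eq_max (x : ℝ) : (if 0 < x then x else 0) = max x 0 := by
  split_ifs with h
  · exact (max_eq_left h.le).symm
  · exact (max_eq_right (not_lt.1 h)).symm

/-- Negative-power Lipschitz estimate away from zero. -/
private lemma rpow_lipschitz {c m u v : ℝ} (hc : c < 0) (hm : 0 < m)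
    (hu : m ≤ u) (hv : m ≤ v) :
    |u ^ c - v ^ c| ≤ (-c) * m ^ (c - 1) * |u - v| := by
  have key : ∀ x ∈ Ici m, HasDerivWithinAt (fun z : ℝ => z ^ c) (c * x ^ (c - 1)) (Ici m) x := by
    intro x hx
    exact (Real.hasDerivAt_rpow_const (Or.inl (by simp at hx; nlinarith))).hasDerivWithinAt
  have bnd : ∀ x ∈ Ici m, ‖c * x ^ (c - 1)‖ ≤ (-c) * m ^ (c - 1) := by
    intro x hx
    simp only [mem_Ici] at hx
    have hx0 : 0 < x := lt_of_lt_of_le hm hx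
    rw [norm_mul, Real.norm_eq_abs, Real.norm_eq_abs, abs_of_neg hc,
      abs_of_pos (Real.rpow_pos_of_pos hx0 _)]
    exact mul_le_mul_of_nonneg_left
      (Real.rpow_le_rpow_of_nonpos hm hx (by linarith)) (by linarith)
  have := (convex_Ici m).norm_image_sub_le_of_norm_hasDerivWithin_le key bnd
    (mem_Ici.2 hv) (mem_Ici.2 hu)
  simpa [Real.norm_eq_abs] using this

/-- **Theorem 3.5.** For any `ε* > 0`, if the `ε*`-approximating equation has a
unique continuous solution on `[0,T]`, then `lim_{ε→ε*} X^ε_t = X^{ε*}_t` for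
all `t ∈ [0,T]`. -/
theorem approx_continuous_in_epsilon
    (X₀ a b σ H : ℝ) (hX₀ : 0 < X₀) (ha : 0 < a) (hb : 0 ≤ b) (hσ : 0 < σ)
    (hH0 : 0 < H) (hH : H < 1/2)
    (g : ℝ → ℝ) (hgc : ContinuousOn g (Set.Ici 0)) (hg0 : g 0 = 0)
    (T : ℝ) (hT : 0 < T) (εs : ℝ) (hεs : 0 < εs)
    (Xe : ℝ → ℝ → ℝ)
    (hXe : ∀ ε > (0:ℝ), approxSol X₀ a b σ H g T ε (Xe ε))
    (huniq : ∀ Y : ℝ → ℝ, approxSol X₀ a b σ H g T εs Y →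
      ∀ t ∈ Set.Icc (0:ℝ) T, Y t = Xe εs t) :
    ∀ t ∈ Set.Icc (0:ℝ) T,
      Tendsto (fun ε => Xe ε t) (nhdsWithin εs {εs}ᶜ) (nhds (Xe εs t)) := by
  intro t ht
  obtain ⟨ht0, htT⟩ := ht
  set c : ℝ := 2 * H - 1 with hc_def
  have hc : c < 0 := by rw [hc_def]; linarith
  have hc' : (0:ℝ) < -c := by linarith
  set m : ℝ := εs / 2 with hm_def
  have hm : 0 < m := by rw [hm_def]; linarith
  have hmεs : m < εs := by rw [hm_def]; linarith
  have hmc : 0 < m ^ c := Real.rpow_pos_of_pos hm c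
  have hmc1 : 0 < m ^ (c - 1) := Real.rpow_pos_of_pos hm _
  set K₁ : ℝ := a * m ^ c / (m * εs) + b with hK₁_def
  have hK₁ : 0 < K₁ := by
    have : 0 < a * m ^ c / (m * εs) := by positivity
    rw [hK₁_def]; linarith
  set K₂ : ℝ := a * m ^ c / (m * εs) + a * (-c) * m ^ (c - 1) / εs with hK₂_def
  -- continuity data for a fixed parameter
  have hφcont : ∀ e : ℝ, 0 < e → ContinuousOn
      (fun s => (s + e) ^ c / (max (Xe e s) 0 + e)) (Icc 0 T) := by
    intro e he
    have hXc : ContinuousOn (Xe e) (Icc 0 T) := (hXe e he).1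
    apply ContinuousOn.div
    · apply ContinuousOn.rpow_const (continuousOn_id.add continuousOn_const)
      intro s hs
      exact Or.inl (by have := hs.1; show s + e ≠ 0; exact ne_of_gt (by linarith))
    · exact ((continuous_id.max continuous_const).comp_continuousOn hXc).add continuousOn_const
    · intro s _
      have : (0:ℝ) ≤ max (Xe e s) 0 := le_max_right _ _
      positivity
  -- the key Grönwall estimate
  have key : ∀ ε ∈ Ioo m (εs + m),
      |Xe ε t - Xe εs t| ≤ gronwallBound 0 K₁ (K₂ * |ε - εs|) (t - 0) := by
    intro ε hε
    have hε0 : 0 < ε := hm.trans hε.1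
    obtain ⟨hXc, hXeq⟩ := hXe ε hε0
    obtain ⟨hYc, hYeq⟩ := hXe εs hεs
    set δ := |ε - εs| with hδ_def
    set h : ℝ → ℝ := fun s =>
      a * ((s + ε) ^ c / (max (Xe ε s) 0 + ε) - (s + εs) ^ c / (max (Xe εs s) 0 + εs))
        - b * (Xe ε s - Xe εs s) with hh_def
    have hhc : ContinuousOn h (Icc 0 T) := by
      apply ContinuousOn.sub
      · exact continuousOn_const.mul ((hφcont ε hε0).sub (hφcont εs hεs))
      · exact continuousOn_const.mul (hXc.sub hYc)
    have hfD : ∀ u ∈ Icc (0:ℝ) T, (∫ s in (0:ℝ)..u, h s) = Xe ε u - Xe εs u := by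
      intro u hu
      have hsub : Icc (0:ℝ) u ⊆ Icc 0 T := Icc_subset_Icc le_rfl hu.2
      have hui : uIcc (0:ℝ) u = Icc 0 u := uIcc_of_le hu.1
      have i1 : IntervalIntegrable
          (fun s => (s + ε) ^ c / (max (Xe ε s) 0 + ε)) volume 0 u := by
        apply ContinuousOn.intervalIntegrable; rw [hui]
        exact (hφcont ε hε0).mono hsub
      have i2 : IntervalIntegrable
          (fun s => (s + εs) ^ c / (max (Xe εs s) 0 + εs)) volume 0 u := by
        apply ContinuousOn.intervalIntegrable; rw [hui]
        exact (hφcont εs hεs).mono hsub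
      have iX : IntervalIntegrable (Xe ε) volume 0 u := by
        apply ContinuousOn.intervalIntegrable; rw [hui]; exact hXc.mono hsub
      have iY : IntervalIntegrable (Xe εs) volume 0 u := by
        apply ContinuousOn.intervalIntegrable; rw [hui]; exact hYc.mono hsub
      have e1 := hXeq u hu
      have e2 := hYeq u hu
      simp only [ite_pos_eq_max] at e1 e2
      rw [hh_def]
      rw [intervalIntegral.integral_sub
          (((i1.sub i2)).const_mul a) ((iX.sub iY).const_mul b),
        intervalIntegral.integral_const_mul, intervalIntegral.integral_const_mul,
        intervalIntegral.integral_sub i1 i2, intervalIntegral.integral_sub iX iY]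
      rw [e1, e2]
      ring
    have hcontf : ContinuousOn (fun u => ∫ s in (0:ℝ)..u, h s) (Icc 0 T) :=
      (hXc.sub hYc).congr hfD
    have hderiv : ∀ u ∈ Ico (0:ℝ) T,
        HasDerivWithinAt (fun v => ∫ s in (0:ℝ)..v, h s) (h u) (Ici u) u := by
      intro u hu
      have hI : IntervalIntegrable h volume 0 u := by
        apply ContinuousOn.intervalIntegrable
        rw [uIcc_of_le hu.1]
        exact hhc.mono (Icc_subset_Icc le_rfl hu.2.le)
      have hst : Icc u T ∈ 𝓝[>] u := by
        rw [mem_nhdsWithin_iff_exists_mem_nhds_inter]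
        exact ⟨Iio T, Iio_mem_nhds hu.2, fun x hx => ⟨le_of_lt hx.2, hx.1.le⟩⟩
      have hmeas : StronglyMeasurableAtFilter h (𝓝[>] u) volume :=
        ⟨Icc u T, hst,
          (hhc.mono (Icc_subset_Icc hu.1 le_rfl)).aestronglyMeasurable measurableSet_Icc⟩
      have hcw : ContinuousWithinAt h (Ioi u) u :=
        (hhc u ⟨hu.1, hu.2.le⟩).mono_of_mem_nhdsWithin
          (mem_of_superset hst (Icc_subset_Icc hu.1 le_rfl))
      exact intervalIntegral.integral_hasDerivWithinAt_right hI hmeas hcw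
    have hbound : ∀ u ∈ Ico (0:ℝ) T,
        ‖h u‖ ≤ K₁ * ‖(∫ s in (0:ℝ)..u, h s)‖ + K₂ * δ := by
      intro u hu
      have hu' : u ∈ Icc (0:ℝ) T := ⟨hu.1, hu.2.le⟩
      rw [hfD u hu', Real.norm_eq_abs, Real.norm_eq_abs]
      set d := Xe ε u - Xe εs u with hd_def
      set A := (u + ε) ^ c with hA_def
      set B := (u + εs) ^ c with hB_def
      set x := max (Xe ε u) 0 + ε with hx_def
      set y := max (Xe εs u) 0 + εs with hy_def
      have hx : m ≤ x := hε.1.le.trans (le_add_of_nonneg_left (le_max_right _ _))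
      have hy : εs ≤ y := le_add_of_nonneg_left (le_max_right _ _)
      have hx0 : 0 < x := hm.trans_le hx
      have hy0 : 0 < y := hεs.trans_le hy
      have hu0 : 0 ≤ u := hu.1
      have hmuε : m ≤ u + ε := by linarith [hε.1.le]
      have hmuεs : m ≤ u + εs := by linarith
      have hA0 : 0 < A := Real.rpow_pos_of_pos (by linarith) c
      have hAm : A ≤ m ^ c := Real.rpow_le_rpow_of_nonpos hm hmuε hc.le
      have hAB : |A - B| ≤ (-c) * m ^ (c - 1) * δ := by
        have := rpow_lipschitz hc hm hmuε hmuεs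
        have heq : u + ε - (u + εs) = ε - εs := by ring
        rw [heq] at this
        exact this
      have hxy : |y - x| ≤ |d| + δ := by
        have h1 : |max (Xe εs u) 0 - max (Xe ε u) 0| ≤ |Xe εs u - Xe ε u| :=
          abs_max_sub_max_le_abs _ _ _
        have h2 : y - x = (max (Xe εs u) 0 - max (Xe ε u) 0) + (εs - ε) := by
          rw [hx_def, hy_def]; ring
        calc |y - x| ≤ |max (Xe εs u) 0 - max (Xe ε u) 0| + |εs - ε| := by
              rw [h2]; exact abs_add_le _ _
          _ ≤ |Xe εs u - Xe ε u| + |εs - ε| := by linarith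
          _ = |d| + δ := by rw [hd_def, hδ_def, abs_sub_comm (Xe εs u), abs_sub_comm εs]
      have split : A / x - B / y = A * (y - x) / (x * y) + (A - B) / y := by
        field_simp
        ring
      have t1 : |A * (y - x) / (x * y)| ≤ m ^ c * (|d| + δ) / (m * εs) := by
        rw [abs_div, abs_mul, abs_of_pos hA0, abs_of_pos (mul_pos hx0 hy0)]
        apply div_le_div₀ (by positivity)
          (mul_le_mul hAm hxy (abs_nonneg _) hmc.le)
          (by positivity)
          (mul_le_mul hx hy hεs.le hx0.le)
      have t2 : |(A - B) / y| ≤ ((-c) * m ^ (c - 1) * δ) / εs := by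
        rw [abs_div, abs_of_pos hy0]
        exact div_le_div₀ (by positivity) hAB hεs hy
      have hsplit_bound : |A / x - B / y| ≤
          m ^ c * (|d| + δ) / (m * εs) + ((-c) * m ^ (c - 1) * δ) / εs := by
        rw [split]
        exact (abs_add_le _ _).trans (add_le_add t1 t2)
      have hhu : h u = a * (A / x - B / y) - b * d := rfl
      calc |h u| ≤ a * |A / x - B / y| + b * |d| := by
            rw [hhu]
            refine (abs_sub _ _).trans ?_
            rw [abs_mul, abs_mul, abs_of_pos ha, abs_of_nonneg hb]
        _ ≤ a * (m ^ c * (|d| + δ) / (m * εs) + ((-c) * m ^ (c - 1) * δ) / εs) + b * |d| := by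
            have := mul_le_mul_of_nonneg_left hsplit_bound ha.le
            linarith
        _ = K₁ * |d| + K₂ * δ := by
            rw [hK₁_def, hK₂_def]
            field_simp
            ring
    have h0 : ‖(∫ s in (0:ℝ)..(0:ℝ), h s)‖ ≤ 0 := by simp
    have := norm_le_gronwallBound_of_norm_deriv_right_le hcontf hderiv h0 hbound t ⟨ht0, htT⟩
    rw [hfD t ⟨ht0, htT⟩, Real.norm_eq_abs] at this
    exact this
  -- pass to the limit
  set C : ℝ := K₂ / K₁ * (Real.exp (K₁ * (t - 0)) - 1) with hC_def
  have hgb : ∀ δ : ℝ, gronwallBound 0 K₁ (K₂ * δ) (t - 0) = C * δ := by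
    intro δ
    rw [gronwallBound_of_K_ne_0 hK₁.ne', hC_def]
    field_simp
    ring
  rw [tendsto_iff_dist_tendsto_zero]
  have hlim : Tendsto (fun ε : ℝ => C * |ε - εs|) (nhdsWithin εs {εs}ᶜ) (nhds 0) := by
    have h1 : Tendsto (fun ε : ℝ => C * |ε - εs|) (nhds εs) (nhds (C * |εs - εs|)) :=
      (continuous_const.mul (continuous_id.sub continuous_const).abs).tendsto εs
    simpa using h1.mono_left nhdsWithin_le_nhds
  apply squeeze_zero' (Eventually.of_forall fun _ => dist_nonneg) _ hlim
  have hmem : Ioo m (εs + m) ∈ nhdsWithin εs ({εs}ᶜ : Set ℝ) :=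
    nhdsWithin_le_nhds (Ioo_mem_nhds hmεs (by linarith))
  filter_upwards [hmem] with ε hε
  rw [Real.dist_eq]
  calc |Xe ε t - Xe εs t| ≤ gronwallBound 0 K₁ (K₂ * |ε - εs|) (t - 0) := key ε hε
    _ = C * |ε - εs| := hgb _
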